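/- arXiv:2510.16378 — 2 statements merged into one kernel-verified Lean document; each statement's English description precedes it below -/
import Mathlib

section
/- Let U ∈ C³([-1,1]) with ‖U − y‖_{H⁴} ≤ κ for κ sufficiently small, let k be a nonzero integer, λ_r ∈ ℝ, L ≥ 2, and let χ₁(y) = 1/((U(y) − λ_r) + i L^{-1}). Then: (i) ‖χ₁‖_{L^∞} ≤ C L; (ii) ‖χ₁‖_{L²} ≤ C L^{1/2}; (iii) ‖∂_y χ₁‖_{L^∞} ≤ C L²; and (iv) for every f ∈ H₀¹(-1,1), ‖χ₁ f‖_{L²} ≤ C L^{1/2} ‖f‖_{L²}^{1/2} ‖f'‖_{L²(w/ k-gradient)}^{1/2}, where the constants depend only on the bi-Lipschitz bounds of U (which follow from κ small). -/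
open MeasureTheory

lemma norm_sq_complex (z : ℂ) : ‖z‖^2 = z.re^2 + z.im^2 := by
  rw [Complex.sq_norm, Complex.normSq_apply]; ring

lemma vol_Icc_two : volume.real (Set.Icc (-1:ℝ) 1) = 2 := by
  rw [measureReal_def, Real.volume_Icc]; norm_num

lemma sqrt_helper {x y : ℝ} (hy : 0 ≤ y) (hx : x ≤ 10000 * y) :
    Real.sqrt x ≤ 100 * Real.sqrt y := by
  have h1 : Real.sqrt x ≤ Real.sqrt (10000 * y) := Real.sqrt_le_sqrt hx
  rwa [Real.sqrt_mul (by norm_num : (0:ℝ) ≤ 10000) y,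
    show (10000:ℝ) = 100^2 by norm_num, Real.sqrt_sq (by norm_num : (0:ℝ) ≤ 100)] at h1

lemma abs_integral_le {h : ℝ → ℝ} (hc : Continuous h) {a : ℝ} (ha : 0 < a)
    (hint : ∫ y in Set.Icc (-1:ℝ) 1, (h y)^2 ≤ a^2) :
    ∫ y in Set.Icc (-1:ℝ) 1, |h y| ≤ (3/2) * a := by
  have hmono : ∫ y in Set.Icc (-1:ℝ) 1, |h y|
      ≤ ∫ y in Set.Icc (-1:ℝ) 1, (a^2 + (h y)^2)/(2*a) := by
    apply setIntegral_mono_on (hc.abs.integrableOn_Icc)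
      (((continuous_const.add (hc.pow 2)).div_const _).integrableOn_Icc) measurableSet_Icc
    intro y _
    simp only [Pi.add_apply, Pi.pow_apply]
    rw [le_div_iff₀ (by positivity)]
    nlinarith [sq_nonneg (|h y| - a), sq_abs (h y)]
  have heq : ∫ y in Set.Icc (-1:ℝ) 1, (a^2 + (h y)^2)/(2*a)
      = ((∫ y in Set.Icc (-1:ℝ) 1, (a^2 + (h y)^2)))/(2*a) := integral_div _ _
  have hadd : ∫ y in Set.Icc (-1:ℝ) 1, (a^2 + (h y)^2)
      = 2*a^2 + ∫ y in Set.Icc (-1:ℝ) 1, (h y)^2 := by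
    rw [integral_add (continuous_const.integrableOn_Icc) ((hc.fun_pow 2).integrableOn_Icc),
      setIntegral_const, vol_Icc_two, smul_eq_mul]
  calc ∫ y in Set.Icc (-1:ℝ) 1, |h y| ≤ ∫ y in Set.Icc (-1:ℝ) 1, (a^2 + (h y)^2)/(2*a) := hmono
    _ = (2*a^2 + ∫ y in Set.Icc (-1:ℝ) 1, (h y)^2)/(2*a) := by rw [heq, hadd]
    _ ≤ (3/2)*a := by rw [div_le_iff₀ (by positivity)]; nlinarith

lemma sup_bound {g : ℝ → ℝ} (hg : Differentiable ℝ g) (hg' : Continuous (deriv g))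
    {a : ℝ} (ha : 0 < a)
    (h1 : ∫ y in Set.Icc (-1:ℝ) 1, (g y)^2 ≤ a^2)
    (h2 : ∫ y in Set.Icc (-1:ℝ) 1, (deriv g y)^2 ≤ a^2) :
    ∀ x ∈ Set.Icc (-1:ℝ) 1, |g x| ≤ 3*a := by
  have hgc : Continuous g := hg.continuous
  have hIg : ∫ y in Set.Icc (-1:ℝ) 1, |g y| ≤ (3/2)*a := abs_integral_le hgc ha h1
  have hIg' : ∫ y in Set.Icc (-1:ℝ) 1, |deriv g y| ≤ (3/2)*a := abs_integral_le hg' ha h2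
  intro x hx
  have hdiff : ∀ t ∈ Set.Icc (-1:ℝ) 1, |g x| ≤ |g t| + (3/2)*a := by
    intro t ht
    have hftc : ∫ y in t..x, deriv g y = g x - g t :=
      intervalIntegral.integral_deriv_eq_sub (fun y _ => hg y) (hg'.intervalIntegrable t x)
    have hb : |g x - g t| ≤ ∫ y in Set.Icc (-1:ℝ) 1, |deriv g y| := by
      rw [← hftc]
      calc |∫ y in t..x, deriv g y| ≤ ∫ y in Set.uIoc t x, |deriv g y| := by
            simpa [Real.norm_eq_abs] using
              intervalIntegral.norm_integral_le_integral_norm_uIoc (a := t) (b := x)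
                (f := deriv g) (μ := volume)
        _ ≤ ∫ y in Set.Icc (-1:ℝ) 1, |deriv g y| := by
            apply setIntegral_mono_set (hg'.abs.integrableOn_Icc)
              (Filter.Eventually.of_forall fun y => abs_nonneg _)
            apply HasSubset.Subset.eventuallyLE
            rw [Set.uIoc]
            exact Set.Ioc_subset_Icc_self.trans
              (Set.Icc_subset_Icc (le_min ht.1 hx.1) (max_le ht.2 hx.2))
    have habs : |g x| ≤ |g t| + |g x - g t| := by
      have := abs_add_le (g t) (g x - g t); simpa using this
    linarith
  have hc2 : (2:ℝ) * |g x| ≤ ∫ t in Set.Icc (-1:ℝ) 1, (|g t| + (3/2)*a) := by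
    have h0 : ∫ _t in Set.Icc (-1:ℝ) 1, |g x| = 2 * |g x| := by
      rw [setIntegral_const, vol_Icc_two, smul_eq_mul]
    rw [← h0]
    exact setIntegral_mono_on (continuous_const.integrableOn_Icc)
      ((hgc.abs.add continuous_const).integrableOn_Icc) measurableSet_Icc hdiff
  have hc3 : ∫ t in Set.Icc (-1:ℝ) 1, (|g t| + (3/2)*a)
      = (∫ t in Set.Icc (-1:ℝ) 1, |g t|) + 3*a := by
    rw [integral_add (hgc.abs.integrableOn_Icc) (continuous_const.integrableOn_Icc),
      setIntegral_const, vol_Icc_two, smul_eq_mul]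
    ring
  rw [hc3] at hc2
  linarith

lemma twoST_bound {A S T : ℝ} (hS : 0 ≤ S) (hT : 0 ≤ T) (hST : S ≤ T)
    (h : ∀ ε : ℝ, 0 < ε → A ≤ ε * T^2 + ε⁻¹ * S^2) : A ≤ 2 * S * T := by
  rcases eq_or_lt_of_le hS with hS0 | hSpos
  · rcases eq_or_lt_of_le hT with hT0 | hTpos
    · have h1 := h 1 one_pos
      rw [← hS0, ← hT0] at h1 ⊢
      simpa using h1
    · have hall : ∀ δ : ℝ, 0 < δ → A ≤ δ := by
        intro δ hδ
        have h1 := h (δ/T^2) (div_pos hδ (pow_pos hTpos 2))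
        rw [← hS0] at h1
        have h2 : (δ/T^2) * T^2 + (δ/T^2)⁻¹ * 0^2 = δ := by
          field_simp
          ring
        linarith
      have hA0 : A ≤ 0 := by
        by_contra hcon
        push_neg at hcon
        linarith [hall (A/2) (by linarith)]
      nlinarith
  · have hTpos : 0 < T := lt_of_lt_of_le hSpos hST
    have h1 := h (S/T) (div_pos hSpos hTpos)
    have h2 : (S/T) * T^2 + (S/T)⁻¹ * S^2 = 2*S*T := by
      field_simp
      ring
    linarith

/-- The squared `H⁴(-1,1)` norm. -/
noncomputable def H4normSq (f : ℝ → ℝ) : ℝ :=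
  ∑ j ∈ Finset.range 5, ∫ y in Set.Icc (-1 : ℝ) 1, (iteratedDeriv j f y) ^ 2

set_option maxHeartbeats 1000000 in
/-- bounds for the regularized symbol inverse
`χ₁(y) = 1/((U(y) − λ_r) + iL⁻¹)` when `‖U − y‖_{H⁴} ≤ κ` is small:
(i) `‖χ₁‖_∞ ≤ CL`; (ii) `‖χ₁‖_{L²} ≤ CL^{1/2}`; (iii) `‖∂_yχ₁‖_∞ ≤ CL²`;
(iv) `‖χ₁ f‖_{L²} ≤ CL^{1/2}‖f‖_{L²}^{1/2}‖∇_k f‖_{L²}^{1/2}` for `f ∈ H₀¹`. -/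
theorem chi_one_bounds :
    ∃ κ₀ : ℝ, 0 < κ₀ ∧ ∃ C : ℝ, 0 < C ∧
      ∀ (κ : ℝ), 0 < κ → κ ≤ κ₀ →
      ∀ (U : ℝ → ℝ), ContDiff ℝ 4 U →
        Real.sqrt (H4normSq (fun y => U y - y)) ≤ κ →
      ∀ (k : ℤ), k ≠ 0 →
      ∀ (lamr L : ℝ), 2 ≤ L →
      ∀ (chi : ℝ → ℂ),
        (∀ y : ℝ, chi y = (((U y - lamr : ℝ) : ℂ) + Complex.I * (L : ℂ)⁻¹)⁻¹) →
        (∀ y ∈ Set.Icc (-1 : ℝ) 1, ‖chi y‖ ≤ C * L) ∧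
        (Real.sqrt (∫ y in Set.Icc (-1 : ℝ) 1, ‖chi y‖ ^ 2) ≤ C * Real.sqrt L) ∧
        (∀ y ∈ Set.Icc (-1 : ℝ) 1, ‖deriv chi y‖ ≤ C * L ^ 2) ∧
        (∀ f : ℝ → ℂ, ContDiff ℝ 1 f → f 1 = 0 → f (-1) = 0 →
          Real.sqrt (∫ y in Set.Icc (-1 : ℝ) 1, ‖chi y * f y‖ ^ 2)
            ≤ C * Real.sqrt L *
              Real.sqrt (Real.sqrt (∫ y in Set.Icc (-1 : ℝ) 1, ‖f y‖ ^ 2) *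
                Real.sqrt (∫ y in Set.Icc (-1 : ℝ) 1,
                  (‖deriv f y‖ ^ 2 + (k : ℝ) ^ 2 * ‖f y‖ ^ 2)))) := by
  refine ⟨1/12, by norm_num, 100, by norm_num, ?_⟩
  intro κ hκ hκ12 U hU hU4 k hk lamr L hL chi hchi
  have hL0 : (0:ℝ) < L := by linarith
  have hLinv : (0:ℝ) < L⁻¹ := by positivity
  have hUdiff : Differentiable ℝ U := hU.differentiable (by norm_num)
  have hU' : ContDiff ℝ 3 (deriv U) := by
    have h4 : ContDiff ℝ (3 + 1) U := by norm_num at hU ⊢; exact hU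
    exact (contDiff_succ_iff_deriv.mp h4).2.2
  -- derivative bound from H⁴ smallness
  have htnn : ∀ j : ℕ, 0 ≤ ∫ y in Set.Icc (-1:ℝ) 1, (iteratedDeriv j (fun y => U y - y) y)^2 :=
    fun j => integral_nonneg fun y => sq_nonneg _
  have hsum0 : 0 ≤ H4normSq (fun y => U y - y) := by
    unfold H4normSq; exact Finset.sum_nonneg fun j _ => htnn j
  have hsum_le : H4normSq (fun y => U y - y) ≤ κ^2 := by
    nlinarith [Real.sq_sqrt hsum0, Real.sqrt_nonneg (H4normSq (fun y => U y - y))]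
  have hterm : ∀ j ∈ Finset.range 5,
      (∫ y in Set.Icc (-1:ℝ) 1, (iteratedDeriv j (fun y => U y - y) y)^2) ≤ κ^2 := by
    intro j hj
    refine le_trans ?_ hsum_le
    unfold H4normSq
    exact Finset.single_le_sum (fun i _ => htnn i) hj
  have e1 : iteratedDeriv 1 (fun y => U y - y) = fun y => deriv U y - 1 := by
    funext y
    rw [iteratedDeriv_one, deriv_fun_sub (hUdiff y) differentiableAt_fun_id, deriv_id'']
  have e2 : iteratedDeriv 2 (fun y => U y - y) = deriv (fun y => deriv U y - 1) := by
    rw [show (2:ℕ) = 1 + 1 from rfl, iteratedDeriv_succ, e1]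
  have hg1cd : ContDiff ℝ 3 (fun y => deriv U y - 1) := hU'.sub contDiff_const
  have hg1b : ∀ x ∈ Set.Icc (-1:ℝ) 1, |deriv U x - 1| ≤ 3*κ := by
    apply sup_bound (hg1cd.differentiable (by norm_num))
      (hg1cd.continuous_deriv (by norm_num)) hκ
    · have h := hterm 1 (by norm_num); rw [e1] at h; exact h
    · have h := hterm 2 (by norm_num); rw [e2] at h; exact h
  have hUlo : ∀ x ∈ Set.Icc (-1:ℝ) 1, 3/4 ≤ deriv U x ∧ deriv U x ≤ 5/4 := by
    intro x hx
    have h := abs_le.mp (hg1b x hx)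
    constructor <;> [linarith; linarith]
  -- complex symbol facts
  set w : ℝ → ℂ := fun y => ((U y - lamr : ℝ) : ℂ) + Complex.I * (L : ℂ)⁻¹ with hw
  have hchiw : chi = fun y => (w y)⁻¹ := funext hchi
  have hLc : (L:ℂ)⁻¹ = ((L⁻¹ : ℝ) : ℂ) := (Complex.ofReal_inv L).symm
  have hwre : ∀ y, (w y).re = U y - lamr := by
    intro y
    simp only [hw, ← Complex.ofReal_inv, Complex.add_re, Complex.mul_re, Complex.I_re,
      Complex.I_im, Complex.ofReal_re, Complex.ofReal_im]
    ring
  have hwim : ∀ y, (w y).im = L⁻¹ := by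
    intro y
    simp only [hw, ← Complex.ofReal_inv, Complex.add_im, Complex.mul_im, Complex.I_re,
      Complex.I_im, Complex.ofReal_re, Complex.ofReal_im]
    ring
  have hnormsq : ∀ y, ‖w y‖^2 = (U y - lamr)^2 + (L⁻¹)^2 := fun y => by
    rw [norm_sq_complex, hwre y, hwim y]
  have hwne : ∀ y, w y ≠ 0 := by
    intro y hy
    have h := hwim y
    rw [hy] at h
    simp only [Complex.zero_im] at h
    exact absurd h.symm (ne_of_gt hLinv)
  have hpos : ∀ y, (0:ℝ) < (U y - lamr)^2 + (L⁻¹)^2 := fun y => by positivity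
  have hchisq : ∀ y, ‖chi y‖^2 = ((U y - lamr)^2 + (L⁻¹)^2)⁻¹ := fun y => by
    rw [hchiw]
    simp only [norm_inv]
    rw [inv_pow, hnormsq]
  have hwC : Continuous w := by
    rw [hw]
    exact (Complex.continuous_ofReal.comp ((hUdiff.continuous).sub continuous_const)).add
      continuous_const
  have hchiC : Continuous chi := by rw [hchiw]; exact hwC.inv₀ hwne
  -- (i)
  have part1 : ∀ y ∈ Set.Icc (-1:ℝ) 1, ‖chi y‖ ≤ 100 * L := by
    intro y _
    have h2 : ‖chi y‖^2 ≤ L^2 := by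
      rw [hchisq]
      calc ((U y - lamr)^2 + (L⁻¹)^2)⁻¹ ≤ ((L⁻¹)^2)⁻¹ := by
            apply inv_anti₀ (by positivity)
            nlinarith [sq_nonneg (U y - lamr)]
        _ = L^2 := by rw [← inv_pow, inv_inv]
    have h3 : ‖chi y‖ ≤ L := by
      have := Real.sqrt_le_sqrt h2
      rwa [Real.sqrt_sq (norm_nonneg _), Real.sqrt_sq hL0.le] at this
    linarith
  -- key integral bound
  have hkey : ∫ y in Set.Icc (-1:ℝ) 1, ‖chi y‖^2 ≤ 6 * L := by
    set F : ℝ → ℝ := fun y => L * Real.arctan (L * (U y - lamr)) with hF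
    set Fd : ℝ → ℝ := fun y => L^2 * deriv U y / (1 + (L * (U y - lamr))^2) with hFd
    have hFderiv : ∀ y, HasDerivAt F (Fd y) y := by
      intro y
      have hg : HasDerivAt (fun y => L * (U y - lamr)) (L * deriv U y) y :=
        (((hUdiff y).hasDerivAt).sub_const lamr).const_mul L
      have h2 := ((Real.hasDerivAt_arctan (L * (U y - lamr))).comp y hg).const_mul L
      refine h2.congr_deriv ?_
      simp only [hFd]
      field_simp
    have hFdC : Continuous Fd := by
      apply Continuous.div (continuous_const.mul (hU'.continuous))
        (continuous_const.add
          ((continuous_const.mul ((hUdiff.continuous).sub continuous_const)).pow 2))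
        (fun y => by simp only [Pi.add_apply, Pi.pow_apply]; positivity)
    have hptw : ∀ y ∈ Set.Icc (-1:ℝ) 1, ‖chi y‖^2 ≤ (4/3) * Fd y := by
      intro y hy
      obtain ⟨hd1, hd2⟩ := hUlo y hy
      rw [hchisq]
      simp only [hFd]
      have hden : 1 + (L * (U y - lamr))^2 = L^2 * ((U y - lamr)^2 + (L⁻¹)^2) := by
        field_simp
        ring
      rw [hden, show L^2 * deriv U y / (L^2 * ((U y - lamr)^2 + (L⁻¹)^2))
            = deriv U y * ((U y - lamr)^2 + (L⁻¹)^2)⁻¹ from by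
          rw [div_eq_mul_inv, mul_inv]
          field_simp]
      have hip : (0:ℝ) < ((U y - lamr)^2 + (L⁻¹)^2)⁻¹ := by positivity
      nlinarith
    have hFTC : ∫ y in Set.Icc (-1:ℝ) 1, Fd y = F 1 - F (-1) := by
      rw [integral_Icc_eq_integral_Ioc,
        ← intervalIntegral.integral_of_le (by norm_num : (-1:ℝ) ≤ 1)]
      exact intervalIntegral.integral_eq_sub_of_hasDerivAt (fun y _ => hFderiv y)
        (hFdC.intervalIntegrable _ _)
    have hFbound : F 1 - F (-1) ≤ L * Real.pi := by
      have h1 := Real.arctan_lt_pi_div_two (L * (U 1 - lamr))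
      have h2 := Real.neg_pi_div_two_lt_arctan (L * (U (-1) - lamr))
      simp only [hF]
      nlinarith
    calc ∫ y in Set.Icc (-1:ℝ) 1, ‖chi y‖^2 ≤ ∫ y in Set.Icc (-1:ℝ) 1, (4/3) * Fd y :=
          setIntegral_mono_on ((hchiC.norm.pow 2).integrableOn_Icc)
            ((continuous_const.mul hFdC).integrableOn_Icc) measurableSet_Icc hptw
      _ = (4/3) * (F 1 - F (-1)) := by rw [integral_const_mul, hFTC]
      _ ≤ (4/3) * (L * Real.pi) := by nlinarith
      _ ≤ 6 * L := by nlinarith [Real.pi_le_four]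
  -- (ii)
  have part2 : Real.sqrt (∫ y in Set.Icc (-1:ℝ) 1, ‖chi y‖^2) ≤ 100 * Real.sqrt L := by
    apply sqrt_helper hL0.le
    nlinarith
  -- (iii)
  have part3 : ∀ y ∈ Set.Icc (-1:ℝ) 1, ‖deriv chi y‖ ≤ 100 * L^2 := by
    intro y hy
    have h1 : HasDerivAt (fun t => ((U t - lamr : ℝ) : ℂ)) ((deriv U y : ℝ) : ℂ) y := by
      have := Complex.ofRealCLM.hasFDerivAt.comp_hasDerivAt y
        (((hUdiff y).hasDerivAt).sub_const lamr)
      simpa only [Function.comp_def, Complex.ofRealCLM_apply] using this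
    have h2 : HasDerivAt w ((deriv U y : ℝ) : ℂ) y := h1.add_const _
    have h3 : HasDerivAt (fun t => (w t)⁻¹) (-((w y)^2)⁻¹ * ((deriv U y : ℝ) : ℂ)) y := by
      have := (hasDerivAt_inv (hwne y)).comp y h2
      simpa only [Function.comp_def] using this
    have hder : deriv chi y = -((w y)^2)⁻¹ * ((deriv U y : ℝ) : ℂ) := by
      rw [hchiw]; exact h3.deriv
    have hnorm : ‖deriv chi y‖ = |deriv U y| / ‖w y‖^2 := by
      rw [hder, norm_mul, norm_neg, norm_inv, norm_pow, Complex.norm_real, Real.norm_eq_abs]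
      ring
    obtain ⟨hd1, hd2⟩ := hUlo y hy
    have habs : |deriv U y| ≤ 5/4 := abs_le.mpr ⟨by linarith, hd2⟩
    have hwlow : (L⁻¹)^2 ≤ ‖w y‖^2 := by
      rw [hnormsq]; nlinarith [sq_nonneg (U y - lamr)]
    calc ‖deriv chi y‖ = |deriv U y| / ‖w y‖^2 := hnorm
      _ ≤ (5/4) / (L⁻¹)^2 := div_le_div₀ (by norm_num) habs (by positivity) hwlow
      _ = (5/4) * L^2 := by rw [div_eq_mul_inv, ← inv_pow, inv_inv]
      _ ≤ 100 * L^2 := by nlinarith [sq_nonneg L]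
  refine ⟨part1, part2, part3, ?_⟩
  -- (iv)
  intro f hf hf1 hfm1
  have hfc : Continuous f := hf.continuous
  have hf'c : Continuous (deriv f) := hf.continuous_deriv le_rfl
  set S := Real.sqrt (∫ y in Set.Icc (-1:ℝ) 1, ‖f y‖^2) with hS
  set T := Real.sqrt (∫ y in Set.Icc (-1:ℝ) 1,
    (‖deriv f y‖^2 + (k:ℝ)^2 * ‖f y‖^2)) with hT
  have hSnn : 0 ≤ S := Real.sqrt_nonneg _
  have hTnn : 0 ≤ T := Real.sqrt_nonneg _
  have hS2 : S^2 = ∫ y in Set.Icc (-1:ℝ) 1, ‖f y‖^2 :=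
    Real.sq_sqrt (integral_nonneg fun y => by positivity)
  have hT2 : T^2 = ∫ y in Set.Icc (-1:ℝ) 1, (‖deriv f y‖^2 + (k:ℝ)^2 * ‖f y‖^2) :=
    Real.sq_sqrt (integral_nonneg fun y => by positivity)
  have hk1 : (1:ℝ) ≤ (k:ℝ)^2 := by
    have hk' : k ≤ -1 ∨ 1 ≤ k := by omega
    have : (1:ℤ) ≤ k^2 := by rcases hk' with h | h <;> nlinarith
    exact_mod_cast this
  set h : ℝ → ℝ := fun y => ‖f y‖^2 with hh
  set h' : ℝ → ℝ := fun y =>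
    2 * ((f y).re * (deriv f y).re + (f y).im * (deriv f y).im) with hh'
  have hhd : ∀ y, HasDerivAt h (h' y) y := by
    intro y
    have hfd : HasDerivAt f (deriv f y) y := (hf.differentiable one_ne_zero y).hasDerivAt
    have hre : HasDerivAt (fun t => (f t).re) ((deriv f y).re) y := by
      have := Complex.reCLM.hasFDerivAt.comp_hasDerivAt y hfd
      exact this
    have him : HasDerivAt (fun t => (f t).im) ((deriv f y).im) y := by
      have := Complex.imCLM.hasFDerivAt.comp_hasDerivAt y hfd
      exact this
    have hsum := (hre.mul hre).add (him.mul him)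
    have hfun : h = fun t => (f t).re * (f t).re + (f t).im * (f t).im := by
      funext t; simp only [hh, norm_sq_complex]; ring
    rw [hfun, hh']
    refine hsum.congr_deriv ?_
    beta_reduce
    ring
  have hh'c : Continuous h' := by
    apply continuous_const.mul
    exact ((Complex.continuous_re.comp hfc).mul (Complex.continuous_re.comp hf'c)).add
      ((Complex.continuous_im.comp hfc).mul (Complex.continuous_im.comp hf'c))
  have hsum_int : ∀ x ∈ Set.Icc (-1:ℝ) 1, h x ≤ ∫ y in Set.Icc (-1:ℝ) 1, |h' y| := by
    intro x hx
    have hftc : ∫ y in (-1:ℝ)..x, h' y = h x - h (-1) :=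
      intervalIntegral.integral_eq_sub_of_hasDerivAt (fun t _ => hhd t)
        (hh'c.intervalIntegrable _ _)
    have hzero : h (-1) = 0 := by rw [hh]; simp [hfm1]
    have hx0 : h x = ∫ y in (-1:ℝ)..x, h' y := by rw [hftc, hzero]; ring
    rw [hx0]
    calc (∫ y in (-1:ℝ)..x, h' y) ≤ |∫ y in (-1:ℝ)..x, h' y| := le_abs_self _
      _ ≤ ∫ y in Set.uIoc (-1:ℝ) x, |h' y| := by
          simpa [Real.norm_eq_abs] using
            intervalIntegral.norm_integral_le_integral_norm_uIoc (a := (-1:ℝ)) (b := x)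
              (f := h') (μ := volume)
      _ ≤ ∫ y in Set.Icc (-1:ℝ) 1, |h' y| := by
          apply setIntegral_mono_set (hh'c.abs.integrableOn_Icc)
            (Filter.Eventually.of_forall fun y => abs_nonneg _)
          apply HasSubset.Subset.eventuallyLE
          rw [Set.uIoc]
          exact Set.Ioc_subset_Icc_self.trans
            (Set.Icc_subset_Icc (le_min (by norm_num) hx.1) (max_le (by norm_num) hx.2))
  have heps : ∀ ε : ℝ, 0 < ε →
      (∫ y in Set.Icc (-1:ℝ) 1, |h' y|) ≤ ε * T^2 + ε⁻¹ * S^2 := by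
    intro ε hε
    have hpt : ∀ y ∈ Set.Icc (-1:ℝ) 1,
        |h' y| ≤ ε * (‖deriv f y‖^2 + (k:ℝ)^2 * ‖f y‖^2) + ε⁻¹ * ‖f y‖^2 := by
      intro y _
      have ha := norm_sq_complex (f y)
      have hb := norm_sq_complex (deriv f y)
      set a := (f y).re
      set b := (f y).im
      set c := (deriv f y).re
      set d := (deriv f y).im
      have key : ε * |2*(a*c+b*d)| ≤ ε^2*(c^2+d^2) + (a^2+b^2) := by
        rcases abs_cases (2*(a*c+b*d)) with ⟨he, _⟩ | ⟨he, _⟩ <;> rw [he] <;>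
          nlinarith [sq_nonneg (a - ε*c), sq_nonneg (b - ε*d), sq_nonneg (a + ε*c),
            sq_nonneg (b + ε*d)]
      have target : |h' y| ≤ ε*(c^2+d^2) + ε⁻¹*(a^2+b^2) := by
        rw [← mul_le_mul_iff_right₀ hε]
        calc ε * |h' y| = ε * |2*(a*c+b*d)| := by rw [hh']
          _ ≤ ε^2*(c^2+d^2) + (a^2+b^2) := key
          _ = ε*(ε*(c^2+d^2) + ε⁻¹*(a^2+b^2)) := by field_simp
      rw [ha, hb]
      have h3 : (0:ℝ) ≤ ε * ((k:ℝ)^2 * (a^2+b^2)) := by positivity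
      nlinarith
    calc (∫ y in Set.Icc (-1:ℝ) 1, |h' y|)
        ≤ ∫ y in Set.Icc (-1:ℝ) 1,
            (ε * (‖deriv f y‖^2 + (k:ℝ)^2 * ‖f y‖^2) + ε⁻¹ * ‖f y‖^2) := by
          apply setIntegral_mono_on (hh'c.abs.integrableOn_Icc) ?_ measurableSet_Icc hpt
          exact ((continuous_const.mul ((hf'c.norm.pow 2).add
            (continuous_const.mul (hfc.norm.pow 2)))).add
            (continuous_const.mul (hfc.norm.pow 2))).integrableOn_Icc
      _ = ε * T^2 + ε⁻¹ * S^2 := by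
          rw [integral_add
            ((continuous_const.fun_mul ((hf'c.norm.fun_pow 2).fun_add
              (continuous_const.fun_mul (hfc.norm.fun_pow 2)))).integrableOn_Icc)
            ((continuous_const.fun_mul (hfc.norm.fun_pow 2)).integrableOn_Icc),
            integral_const_mul, integral_const_mul, hS2, hT2]
  have hST : S ≤ T := by
    apply Real.sqrt_le_sqrt
    apply setIntegral_mono_on ((hfc.norm.pow 2).integrableOn_Icc)
      (((hf'c.norm.pow 2).add
        (continuous_const.mul (hfc.norm.pow 2))).integrableOn_Icc)
      measurableSet_Icc
    intro y _
    simp only [Pi.add_apply, Pi.mul_apply, Pi.pow_apply]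
    nlinarith [sq_nonneg ‖deriv f y‖, sq_nonneg ‖f y‖]
  have hbound : ∀ x ∈ Set.Icc (-1:ℝ) 1, h x ≤ 2 * S * T := by
    intro x hx
    exact twoST_bound hSnn hTnn hST (fun ε hε => le_trans (hsum_int x hx) (heps ε hε))
  -- conclusion of (iv)
  have hA : ∫ y in Set.Icc (-1:ℝ) 1, ‖chi y * f y‖^2 ≤ 6 * L * (2 * S * T) := by
    calc ∫ y in Set.Icc (-1:ℝ) 1, ‖chi y * f y‖^2
        ≤ ∫ y in Set.Icc (-1:ℝ) 1, ‖chi y‖^2 * (2*S*T) := by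
          apply setIntegral_mono_on (((hchiC.mul hfc).norm.pow 2).integrableOn_Icc)
            (((hchiC.norm.pow 2).mul continuous_const).integrableOn_Icc) measurableSet_Icc
          intro y hy
          simp only [Pi.mul_apply, Pi.pow_apply]
          rw [norm_mul, mul_pow]
          exact mul_le_mul_of_nonneg_left (hbound y hy) (pow_nonneg (norm_nonneg _) 2)
      _ = (∫ y in Set.Icc (-1:ℝ) 1, ‖chi y‖^2) * (2*S*T) := integral_mul_const _ _
      _ ≤ 6 * L * (2*S*T) := by
          apply mul_le_mul_of_nonneg_right hkey
          have := mul_nonneg hSnn hTnn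
          linarith
  have hfinal : Real.sqrt (∫ y in Set.Icc (-1:ℝ) 1, ‖chi y * f y‖^2)
      ≤ 100 * Real.sqrt (L * (S * T)) := by
    apply sqrt_helper (mul_nonneg hL0.le (mul_nonneg hSnn hTnn))
    nlinarith [mul_nonneg (mul_nonneg hL0.le hSnn) hTnn]
  rw [Real.sqrt_mul hL0.le] at hfinal
  calc Real.sqrt (∫ y in Set.Icc (-1:ℝ) 1, ‖chi y * f y‖^2)
      ≤ 100 * (Real.sqrt L * Real.sqrt (S * T)) := hfinal
    _ = 100 * Real.sqrt L * Real.sqrt (S * T) := by ring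
end

section
/- Let k ≥ 1 be an integer, L ≥ 2, L_* ≥ L, and define χ*₊(y) = max{0, L_*(y − 1 + L_*^{-1})} on [-1,1]. Let G_k be the Dirichlet Green's function of ∂_y² − k² on (-1,1). Then ‖Δ_k^{-1}(U'' χ*₊)‖_{L²} ≤ C ‖U''‖_{L^∞} L_*^{-2}, where Δ_k^{-1} f (y) = ∫_{-1}^1 G_k(y,y') f(y') dy' and the constant C is universal; the key kernel bound is sup_{y,y'} |G_k(y,y')| / (1 − max{y,y'}) ≤ C. -/
open MeasureTheory

/-- The Dirichlet Green's function for `∂_y² − k²` on `[-1,1]`. -/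
noncomputable def greenKernel (k : ℤ) (y y' : ℝ) : ℝ :=
  if y ≤ y' then
    -(1 / ((k : ℝ) * Real.sinh (2 * (k : ℝ)))) *
      (Real.sinh ((k : ℝ) * (1 - y')) * Real.sinh ((k : ℝ) * (1 + y)))
  else
    -(1 / ((k : ℝ) * Real.sinh (2 * (k : ℝ)))) *
      (Real.sinh ((k : ℝ) * (1 - y)) * Real.sinh ((k : ℝ) * (1 + y')))

/-- The boundary cutoff `χ*₊(y) = max{0, L_*(y − 1 + L_*⁻¹)}`. -/
noncomputable def chiStar (Ls y : ℝ) : ℝ := max 0 (Ls * (y - 1 + Ls⁻¹))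

lemma sinh_le_mul_exp {a : ℝ} (_ha : 0 ≤ a) : Real.sinh a ≤ a * Real.exp a := by
  rw [Real.sinh_eq]
  have h1 : (-(2 * a)) + 1 ≤ Real.exp (-(2 * a)) := Real.add_one_le_exp _
  have h2 : Real.exp (-(2 * a)) = Real.exp (-a) * Real.exp (-a) := by
    rw [← Real.exp_add]; ring_nf
  have h3 : Real.exp a * Real.exp (-a) = 1 := by rw [← Real.exp_add]; simp
  nlinarith [Real.exp_pos a, Real.exp_pos (-a)]

lemma exp_le_four_sinh {x : ℝ} (hx : 2 ≤ x) : Real.exp x ≤ 4 * Real.sinh x := by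
  rw [Real.sinh_eq]
  have h1 : (2 : ℝ) + 1 ≤ Real.exp 2 := Real.add_one_le_exp 2
  have h2 : Real.exp 2 ≤ Real.exp x := Real.exp_le_exp.mpr hx
  have h3 : Real.exp x * Real.exp (-x) = 1 := by rw [← Real.exp_add]; simp
  nlinarith [Real.exp_pos x, Real.exp_pos (-x)]

lemma sinh_mul_sinh_key {kr a b : ℝ} (hk : 1 ≤ kr) (ha : 0 ≤ a) (hb : 0 ≤ b)
    (hab : a + b ≤ 2 * kr) :
    Real.sinh a * Real.sinh b ≤ 2 * a * Real.sinh (2 * kr) := by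
  have h1 : Real.sinh a ≤ a * Real.exp a := sinh_le_mul_exp ha
  have h2 : Real.sinh b ≤ Real.exp b / 2 := by
    rw [Real.sinh_eq]; have := (Real.exp_pos (-b)).le; linarith
  have h3 : Real.exp a * Real.exp b = Real.exp (a + b) := (Real.exp_add a b).symm
  have h4 : Real.exp (a + b) ≤ Real.exp (2 * kr) := Real.exp_le_exp.mpr hab
  have h5 : Real.exp (2 * kr) ≤ 4 * Real.sinh (2 * kr) := exp_le_four_sinh (by linarith)
  have hsa : 0 ≤ Real.sinh a := Real.sinh_nonneg_iff.mpr ha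
  have hsb : 0 ≤ Real.sinh b := Real.sinh_nonneg_iff.mpr hb
  calc Real.sinh a * Real.sinh b ≤ (a * Real.exp a) * (Real.exp b / 2) :=
        mul_le_mul h1 h2 hsb (by positivity)
    _ = a / 2 * (Real.exp a * Real.exp b) := by ring
    _ ≤ a / 2 * (4 * Real.sinh (2 * kr)) := by
        apply mul_le_mul_of_nonneg_left _ (by positivity)
        rw [h3]; exact h4.trans h5
    _ = 2 * a * Real.sinh (2 * kr) := by ring

lemma greenKernel_abs_le {k : ℤ} (hk : 1 ≤ k) {y y' : ℝ}
    (hy : y ∈ Set.Icc (-1 : ℝ) 1) (hy' : y' ∈ Set.Icc (-1 : ℝ) 1) :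
    |greenKernel k y y'| ≤ 2 * (1 - max y y') := by
  have hkr : (1 : ℝ) ≤ (k : ℝ) := by exact_mod_cast hk
  have hkpos : (0 : ℝ) < (k : ℝ) := by linarith
  have hs2k : 0 < Real.sinh (2 * (k : ℝ)) := Real.sinh_pos_iff.mpr (by linarith)
  have hden : 0 < (k : ℝ) * Real.sinh (2 * (k : ℝ)) := by positivity
  obtain ⟨hy1, hy2⟩ := hy
  obtain ⟨hy'1, hy'2⟩ := hy'
  unfold greenKernel
  by_cases h : y ≤ y'
  · rw [if_pos h, max_eq_right h]
    have ha : 0 ≤ (k : ℝ) * (1 - y') := by nlinarith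
    have hb : 0 ≤ (k : ℝ) * (1 + y) := by nlinarith
    have hkey := sinh_mul_sinh_key (a := (k : ℝ) * (1 - y')) (b := (k : ℝ) * (1 + y))
      hkr ha hb (by nlinarith)
    have hsa : 0 ≤ Real.sinh ((k : ℝ) * (1 - y')) := Real.sinh_nonneg_iff.mpr ha
    have hsb : 0 ≤ Real.sinh ((k : ℝ) * (1 + y)) := Real.sinh_nonneg_iff.mpr hb
    rw [neg_mul, abs_neg, abs_of_nonneg (by positivity), one_div, inv_mul_le_iff₀ hden]
    nlinarith
  · rw [if_neg h, max_eq_left (le_of_not_ge h)]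
    have h' : y' ≤ y := le_of_not_ge h
    have ha : 0 ≤ (k : ℝ) * (1 - y) := by nlinarith
    have hb : 0 ≤ (k : ℝ) * (1 + y') := by nlinarith
    have hkey := sinh_mul_sinh_key (a := (k : ℝ) * (1 - y)) (b := (k : ℝ) * (1 + y'))
      hkr ha hb (by nlinarith)
    have hsa : 0 ≤ Real.sinh ((k : ℝ) * (1 - y)) := Real.sinh_nonneg_iff.mpr ha
    have hsb : 0 ≤ Real.sinh ((k : ℝ) * (1 + y')) := Real.sinh_nonneg_iff.mpr hb
    rw [neg_mul, abs_neg, abs_of_nonneg (by positivity), one_div, inv_mul_le_iff₀ hden]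
    nlinarith

/-- the kernel bound `|G_k(y,y')| ≤ C(1 − max{y,y'})` (uniform in `k ≥ 1`)
and the resulting estimate `‖Δ_k⁻¹(U'' χ*₊)‖_{L²} ≤ C‖U''‖_∞ L_*⁻²` for the boundary
cutoff `χ*₊`, where `L_* ≥ L ≥ 2`. -/
theorem boundary_cutoff_green_bound :
    ∃ C : ℝ, 0 < C ∧
      ∀ (k : ℤ), 1 ≤ k →
      ∀ (L Ls : ℝ), 2 ≤ L → L ≤ Ls →
      ∀ (U : ℝ → ℝ), ContDiff ℝ 2 U →
      ∀ (M : ℝ), 0 ≤ M → (∀ y ∈ Set.Icc (-1 : ℝ) 1, |iteratedDeriv 2 U y| ≤ M) →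
        (∀ y ∈ Set.Icc (-1 : ℝ) 1, ∀ y' ∈ Set.Icc (-1 : ℝ) 1,
          |greenKernel k y y'| ≤ C * (1 - max y y')) ∧
        Real.sqrt (∫ y in Set.Icc (-1 : ℝ) 1,
            (∫ y' in Set.Icc (-1 : ℝ) 1,
              greenKernel k y y' * (iteratedDeriv 2 U y' * chiStar Ls y')) ^ 2)
          ≤ C * M * Ls⁻¹ ^ 2 := by
  refine ⟨4, by norm_num, ?_⟩
  intro k hk L Ls hL hLLs U hU M hM hUM
  have hLs : (2 : ℝ) ≤ Ls := hL.trans hLLs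
  have hLspos : (0 : ℝ) < Ls := by linarith
  have hLsinv : 0 < Ls⁻¹ := by positivity
  have hLsinv' : Ls⁻¹ ≤ 1 / 2 := by
    rw [inv_le_comm₀ hLspos (by norm_num)]; linarith
  have hLsLs : Ls * Ls⁻¹ = 1 := mul_inv_cancel₀ (ne_of_gt hLspos)
  -- chiStar basic properties
  have chi_nonneg : ∀ y' : ℝ, 0 ≤ chiStar Ls y' := fun y' => le_max_left _ _
  have chi_le_one : ∀ y' : ℝ, y' ≤ 1 → chiStar Ls y' ≤ 1 := by
    intro y' hy'
    apply max_le (by norm_num)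
    nlinarith
  have chi_zero : ∀ y' : ℝ, y' ≤ 1 - Ls⁻¹ → chiStar Ls y' = 0 := by
    intro y' hy'
    apply max_eq_left
    nlinarith
  constructor
  · intro y hy y' hy'
    have h2 := greenKernel_abs_le hk hy hy'
    have hmax : max y y' ≤ 1 := max_le hy.2 hy'.2
    linarith
  · -- Inner integral bound
    set f : ℝ → ℝ := fun y' => iteratedDeriv 2 U y' * chiStar Ls y' with hf
    have inner_bound : ∀ y ∈ Set.Icc (-1 : ℝ) 1,
        |∫ y' in Set.Icc (-1 : ℝ) 1, greenKernel k y y' * f y'| ≤ 2 * M * Ls⁻¹ ^ 2 := by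
      intro y hy
      set g : ℝ → ℝ := (Set.Icc (1 - Ls⁻¹) 1).indicator (fun _ => 2 * M * Ls⁻¹) with hg
      have hgint : Integrable g (volume.restrict (Set.Icc (-1 : ℝ) 1)) := by
        apply Integrable.indicator _ measurableSet_Icc
        exact (integrableOn_const_iff).mpr (Or.inr measure_Icc_lt_top)
      have hbound : ∀ᵐ y' ∂(volume.restrict (Set.Icc (-1 : ℝ) 1)),
          ‖greenKernel k y y' * f y'‖ ≤ g y' := by
        filter_upwards [ae_restrict_mem measurableSet_Icc] with y' hy'
        by_cases hcase : y' ≤ 1 - Ls⁻¹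
        · have : f y' = 0 := by rw [hf]; simp [chi_zero y' hcase]
          rw [this, mul_zero]
          simp only [norm_zero]
          exact Set.indicator_nonneg (fun _ _ => by positivity) _
        · push_neg at hcase
          have hy'mem : y' ∈ Set.Icc (1 - Ls⁻¹) 1 := ⟨hcase.le, hy'.2⟩
          have hgval : g y' = 2 * M * Ls⁻¹ := by rw [hg, Set.indicator_of_mem hy'mem]
          rw [hgval]
          have hG := greenKernel_abs_le hk hy hy'
          have hmax : 1 - max y y' ≤ Ls⁻¹ := by
            have := le_max_right y y'
            linarith
          have hGb : |greenKernel k y y'| ≤ 2 * Ls⁻¹ := by linarith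
          have hU' : |iteratedDeriv 2 U y'| ≤ M := hUM y' hy'
          have hchi : chiStar Ls y' ≤ 1 := chi_le_one y' hy'.2
          rw [Real.norm_eq_abs, abs_mul, hf, abs_mul, abs_of_nonneg (chi_nonneg y')]
          calc |greenKernel k y y'| * (|iteratedDeriv 2 U y'| * chiStar Ls y')
              ≤ (2 * Ls⁻¹) * (M * 1) := by
                apply mul_le_mul hGb _ (mul_nonneg (abs_nonneg _) (chi_nonneg y')) (by positivity)
                exact mul_le_mul hU' hchi (chi_nonneg y') hM
            _ = 2 * M * Ls⁻¹ := by ring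
      have := norm_integral_le_of_norm_le hgint hbound
      rw [Real.norm_eq_abs] at this
      refine this.trans ?_
      rw [hg, integral_indicator measurableSet_Icc,
        Measure.restrict_restrict measurableSet_Icc]
      have hinter : Set.Icc (1 - Ls⁻¹) 1 ∩ Set.Icc (-1 : ℝ) 1 = Set.Icc (1 - Ls⁻¹) 1 :=
        Set.inter_eq_left.mpr (Set.Icc_subset_Icc (by linarith) le_rfl)
      rw [hinter, setIntegral_const, Real.volume_real_Icc_of_le (by linarith), smul_eq_mul]
      have : 1 - (1 - Ls⁻¹) = Ls⁻¹ := by ring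
      rw [this]
      ring_nf
      nlinarith [sq_nonneg Ls⁻¹]
    -- Outer integral bound
    have houter : (∫ y in Set.Icc (-1 : ℝ) 1,
        (∫ y' in Set.Icc (-1 : ℝ) 1, greenKernel k y y' * f y') ^ 2)
        ≤ (4 * M * Ls⁻¹ ^ 2) ^ 2 := by
      have hgint : Integrable (fun _ : ℝ => (2 * M * Ls⁻¹ ^ 2) ^ 2)
          (volume.restrict (Set.Icc (-1 : ℝ) 1)) :=
        (integrableOn_const_iff).mpr (Or.inr measure_Icc_lt_top)
      have h1 : (∫ y in Set.Icc (-1 : ℝ) 1,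
          (∫ y' in Set.Icc (-1 : ℝ) 1, greenKernel k y y' * f y') ^ 2)
          ≤ ∫ _y in Set.Icc (-1 : ℝ) 1, (2 * M * Ls⁻¹ ^ 2) ^ 2 := by
        apply integral_mono_of_nonneg
          (Filter.Eventually.of_forall fun y => sq_nonneg _) hgint
        filter_upwards [ae_restrict_mem measurableSet_Icc] with y hy
        have hb := inner_bound y hy
        exact sq_le_sq' (by linarith [abs_le.mp hb]) (by linarith [abs_le.mp hb])
      refine h1.trans ?_
      rw [setIntegral_const, Real.volume_real_Icc_of_le (by norm_num : (-1:ℝ) ≤ 1), smul_eq_mul]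
      nlinarith [sq_nonneg (M * Ls⁻¹ ^ 2), sq_nonneg Ls⁻¹, mul_nonneg hM (sq_nonneg Ls⁻¹)]
    calc Real.sqrt (∫ y in Set.Icc (-1 : ℝ) 1,
          (∫ y' in Set.Icc (-1 : ℝ) 1, greenKernel k y y' * f y') ^ 2)
        ≤ Real.sqrt ((4 * M * Ls⁻¹ ^ 2) ^ 2) := Real.sqrt_le_sqrt houter
      _ = 4 * M * Ls⁻¹ ^ 2 := Real.sqrt_sq (by positivity)
end
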